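/- In the setting of the Mirror Descent guarantee — Q ⊆ ℝ^d nonempty compact convex, N a norm on ℝ^d with dual norm N*, ω : Q → ℝ (1/σ)-strongly convex with respect to N, z₀ ∈ ℝ^d, y₀ the maximizer of ⟨z₀,·⟩ − ω over Q, D ≥ sup_{y∈Q}(ω(y) − ω(y₀) − ⟨z₀, y−y₀⟩), f : Q → ℝ convex, T a positive integer, η = √(2D/(Tσρ²)), iterates given by y_t maximizing ⟨z_t,·⟩ − ω over Q, g_t a subgradient of f at y_t on Q with N*(g_t) ≤ ρ, and z_{t+1} = z_t − η g_t for t = 0,…,T−1 — the averaged iterate ȳ = (1/T)·Σ_{t=0}^{T−1} y_t satisfies f(ȳ) − min_{y ∈ Q} f(y) ≤ √(2·D·σ·ρ²/T). In particular f(ȳ) − min_Q f ≤ ε whenever T ≥ 2·D·σ·ρ²/ε². -/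

import Mathlib

open Finset

/-- The standard inner product on `ℝ^d`. -/
noncomputable def dotp {d : ℕ} (x y : Fin d → ℝ) : ℝ := ∑ i, x i * y i

/-- The dual norm `N*(z) = sup {⟨z,x⟩ : N(x) ≤ 1}`. -/
noncomputable def dualNorm {d : ℕ} (N : (Fin d → ℝ) → ℝ) (z : Fin d → ℝ) : ℝ :=
  sSup ((fun x => dotp z x) '' {x | N x ≤ 1})



lemma dotp_sub {d : ℕ} (z a b : Fin d → ℝ) : dotp z (a - b) = dotp z a - dotp z b := by
  simp [dotp, mul_sub, Finset.sum_sub_distrib]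

lemma dotp_smul {d : ℕ} (z : Fin d → ℝ) (c : ℝ) (v : Fin d → ℝ) :
    dotp z (c • v) = c * dotp z v := by
  simp only [dotp, Pi.smul_apply, smul_eq_mul, Finset.mul_sum]
  exact Finset.sum_congr rfl (fun i _ => by ring)

lemma N_nonneg {d : ℕ} (N : (Fin d → ℝ) → ℝ)
    (hN0 : ∀ x : Fin d → ℝ, N x = 0 ↔ x = 0)
    (hNsmul : ∀ (a : ℝ) (x : Fin d → ℝ), N (a • x) = |a| * N x)
    (hNtri : ∀ x y, N (x + y) ≤ N x + N y) (x : Fin d → ℝ) : 0 ≤ N x := by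
  have h0 : N 0 = 0 := (hN0 0).mpr rfl
  have h1 : N ((-1 : ℝ) • x) = N x := by rw [hNsmul]; simp
  have h2 := hNtri x ((-1 : ℝ) • x)
  rw [h1] at h2
  simp only [neg_one_smul, add_neg_cancel, h0] at h2
  linarith

lemma Nsum {d : ℕ} (N : (Fin d → ℝ) → ℝ) (h0 : N 0 = 0)
    (hNtri : ∀ x y, N (x + y) ≤ N x + N y)
    {ι : Type*} (s : Finset ι) (v : ι → Fin d → ℝ) :
    N (∑ i ∈ s, v i) ≤ ∑ i ∈ s, N (v i) := by
  classical
  induction s using Finset.cons_induction with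
  | empty => simp [h0]
  | cons a s ha ih =>
    rw [Finset.sum_cons, Finset.sum_cons]
    exact le_trans (hNtri _ _) (by linarith)

lemma N_upper {d : ℕ} (N : (Fin d → ℝ) → ℝ) (h0 : N 0 = 0)
    (hNsmul : ∀ (a : ℝ) (x : Fin d → ℝ), N (a • x) = |a| * N x)
    (hNtri : ∀ x y, N (x + y) ≤ N x + N y) (x : Fin d → ℝ) :
    N x ≤ (∑ i, N (Pi.single i 1)) * ‖x‖ := by
  have hx : x = ∑ i, (x i) • (Pi.single i 1 : Fin d → ℝ) := by
    funext j
    simp [Finset.sum_apply, Pi.single_apply, mul_comm]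
  calc N x = N (∑ i, (x i) • (Pi.single i 1 : Fin d → ℝ)) := by rw [← hx]
    _ ≤ ∑ i, N ((x i) • (Pi.single i 1 : Fin d → ℝ)) := Nsum N h0 hNtri _ _
    _ = ∑ i, |x i| * N (Pi.single i 1) := by simp [hNsmul]
    _ ≤ ∑ i, ‖x‖ * N (Pi.single i 1) := by
        refine Finset.sum_le_sum fun i _ => ?_
        have h1 : |x i| ≤ ‖x‖ := by
          have := norm_le_pi_norm x i
          simpa using this
        have h2 : 0 ≤ N ((Pi.single i 1 : Fin d → ℝ)) := by
          have := hNtri ((Pi.single i 1 : Fin d → ℝ)) ((-(Pi.single i 1) : Fin d → ℝ))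
          have h3 : N (-((Pi.single i 1 : Fin d → ℝ))) = N (Pi.single i 1) := by
            rw [show -((Pi.single i 1 : Fin d → ℝ)) = ((-1 : ℝ) • (Pi.single i 1 : Fin d → ℝ)) by simp, hNsmul]; simp
          simp only [add_neg_cancel, h0, h3] at this
          linarith
        exact mul_le_mul_of_nonneg_right h1 h2
    _ = (∑ i, N (Pi.single i 1)) * ‖x‖ := by simp [Finset.sum_mul, mul_comm]

lemma N_lower {d : ℕ} (N : (Fin d → ℝ) → ℝ)
    (hN0 : ∀ x : Fin d → ℝ, N x = 0 ↔ x = 0)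
    (hNsmul : ∀ (a : ℝ) (x : Fin d → ℝ), N (a • x) = |a| * N x)
    (hNtri : ∀ x y, N (x + y) ≤ N x + N y) :
    ∃ m > (0:ℝ), ∀ x, m * ‖x‖ ≤ N x := by
  have h0 : N 0 = 0 := (hN0 0).mpr rfl
  have hnn := N_nonneg N hN0 hNsmul hNtri
  rcases Nat.eq_zero_or_pos d with hd | hd
  · refine ⟨1, one_pos, fun x => ?_⟩
    subst hd
    have hx0 : x = 0 := Subsingleton.elim _ _
    rw [hx0, norm_zero, h0]; norm_num
  · haveI : NeZero d := ⟨hd.ne'⟩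
    set C : ℝ := ∑ i, N (Pi.single i 1) with hC
    have hCnn : ∀ a b : Fin d → ℝ, N a - N b ≤ C * ‖a - b‖ := by
      intro a b
      have h1 : N a ≤ N b + N (a - b) := by
        have := hNtri b (a - b); simpa using this
      have h2 := N_upper N h0 hNsmul hNtri (a - b)
      linarith
    have hcont : Continuous N := by
      have hC0 : 0 ≤ C := Finset.sum_nonneg fun i _ => hnn _
      refine (LipschitzWith.of_dist_le_mul (K := ⟨C, hC0⟩) (f := N) ?_).continuous
      intro a b
      rw [Real.dist_eq, dist_eq_norm]
      rw [abs_sub_le_iff]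
      constructor
      · exact hCnn a b
      · have := hCnn b a
        rwa [show b - a = -(a-b) by ring, norm_neg] at this
    obtain ⟨x₀, hx₀s, hx₀min⟩ := (isCompact_sphere (0 : Fin d → ℝ) 1).exists_isMinOn
      (NormedSpace.sphere_nonempty.mpr zero_le_one) hcont.continuousOn
    have hx₀norm : ‖x₀‖ = 1 := by simpa using mem_sphere_iff_norm.mp hx₀s
    have hm : 0 < N x₀ := by
      rcases lt_or_eq_of_le (hnn x₀) with h | h
      · exact h
      · exfalso
        have : x₀ = 0 := (hN0 x₀).mp h.symm
        rw [this] at hx₀norm; simp at hx₀norm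
    refine ⟨N x₀, hm, fun x => ?_⟩
    rcases eq_or_ne x 0 with rfl | hx
    · simp [h0]
    · have hxn : 0 < ‖x‖ := norm_pos_iff.mpr hx
      have hu : (‖x‖⁻¹ • x) ∈ Metric.sphere (0 : Fin d → ℝ) 1 := by
        simp [norm_smul, abs_of_pos (inv_pos.mpr hxn), inv_mul_cancel₀ hxn.ne']
      have := hx₀min hu
      rw [Set.mem_setOf_eq] at this
      have h2 : N (‖x‖⁻¹ • x) = ‖x‖⁻¹ * N x := by
        rw [hNsmul, abs_of_pos (inv_pos.mpr hxn)]
      rw [h2] at this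
      calc N x₀ * ‖x‖ ≤ (‖x‖⁻¹ * N x) * ‖x‖ := by nlinarith
        _ = N x := by field_simp

lemma dual_pairing {d : ℕ} (N : (Fin d → ℝ) → ℝ)
    (hN0 : ∀ x : Fin d → ℝ, N x = 0 ↔ x = 0)
    (hNsmul : ∀ (a : ℝ) (x : Fin d → ℝ), N (a • x) = |a| * N x)
    (hNtri : ∀ x y, N (x + y) ≤ N x + N y)
    (z : Fin d → ℝ) (ρ : ℝ) (h : dualNorm N z ≤ ρ)
    (v : Fin d → ℝ) : dotp z v ≤ ρ * N v := by
  have h0 : N 0 = 0 := (hN0 0).mpr rfl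
  rcases eq_or_ne v 0 with rfl | hv
  · simp [dotp, h0]
  · obtain ⟨m, hm, hml⟩ := N_lower N hN0 hNsmul hNtri
    have hbdd : BddAbove ((fun x => dotp z x) '' {x | N x ≤ 1}) := by
      refine ⟨(∑ i, |z i|) * m⁻¹, fun r hr => ?_⟩
      obtain ⟨x, hx, rfl⟩ := hr
      have hxb : ‖x‖ ≤ m⁻¹ := by
        have := hml x
        rw [Set.mem_setOf_eq] at hx
        rw [inv_eq_one_div, le_div_iff₀ hm]
        nlinarith [hml x]
      calc dotp z x ≤ ∑ i, |z i| * |x i| := by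
            refine Finset.sum_le_sum fun i _ => ?_
            calc z i * x i ≤ |z i * x i| := le_abs_self _
              _ = |z i| * |x i| := abs_mul _ _
        _ ≤ ∑ i, |z i| * m⁻¹ := by
            refine Finset.sum_le_sum fun i _ => ?_
            exact mul_le_mul_of_nonneg_left (le_trans (by simpa using norm_le_pi_norm x i) hxb) (abs_nonneg _)
        _ = (∑ i, |z i|) * m⁻¹ := by rw [Finset.sum_mul]
    have hNv : 0 < N v := by
      rcases lt_or_eq_of_le (N_nonneg N hN0 hNsmul hNtri v) with h' | h'
      · exact h'
      · exact absurd ((hN0 v).mp h'.symm) hv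
    have hmem : dotp z ((N v)⁻¹ • v) ∈ (fun x => dotp z x) '' {x | N x ≤ 1} := by
      refine ⟨(N v)⁻¹ • v, ?_, rfl⟩
      rw [Set.mem_setOf_eq, hNsmul, abs_of_pos (inv_pos.mpr hNv), inv_mul_cancel₀ hNv.ne']
    have := le_trans (le_csSup hbdd hmem) h
    rw [dotp_smul] at this
    have h2 : dotp z v = N v * ((N v)⁻¹ * dotp z v) := by field_simp
    rw [h2]
    calc N v * ((N v)⁻¹ * dotp z v) ≤ N v * ρ := mul_le_mul_of_nonneg_left this hNv.le
      _ = ρ * N v := mul_comm _ _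

lemma dotp_sub_left {d : ℕ} (a b w : Fin d → ℝ) : dotp (a - b) w = dotp a w - dotp b w := by
  simp [dotp, sub_mul, Finset.sum_sub_distrib]

lemma dotp_smul_left {d : ℕ} (c : ℝ) (a w : Fin d → ℝ) : dotp (c • a) w = c * dotp a w := by
  simp only [dotp, Pi.smul_apply, smul_eq_mul, Finset.mul_sum]
  exact Finset.sum_congr rfl (fun i _ => by ring)

lemma dotp_zero_right {d : ℕ} (a : Fin d → ℝ) : dotp a 0 = 0 := by simp [dotp]

set_option maxHeartbeats 2000000 in
/-- **Mirror Descent convergence guarantee** (Corollary 2.3 of the paper): under the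
Mirror Descent setup, the averaged iterate `ȳ = (1/T)·Σ_t y_t` satisfies
`f(ȳ) - min_Q f ≤ √(2Dσρ²/T)`; in particular `f(ȳ) - min_Q f ≤ ε` whenever
`T ≥ 2Dσρ²/ε²`. -/
theorem mirror_descent_convergence
    (d : ℕ) (Q : Set (Fin d → ℝ)) (hQne : Q.Nonempty) (hQcomp : IsCompact Q)
    (hQconv : Convex ℝ Q)
    (N : (Fin d → ℝ) → ℝ)
    (hN0 : ∀ x, N x = 0 ↔ x = 0)
    (hNsmul : ∀ (a : ℝ) (x : Fin d → ℝ), N (a • x) = |a| * N x)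
    (hNtri : ∀ x y, N (x + y) ≤ N x + N y)
    (σ ρ : ℝ) (hσ : 0 < σ) (hρ : 0 < ρ)
    (ω : (Fin d → ℝ) → ℝ)
    (hstrong : ∀ x ∈ Q, ∀ y ∈ Q, ∀ g : Fin d → ℝ,
      (∀ z ∈ Q, ω x + dotp g (z - x) ≤ ω z) →
      (1 / (2 * σ)) * N (y - x) ^ 2 ≤ ω y - ω x - dotp g (y - x))
    (f : (Fin d → ℝ) → ℝ) (hf : ConvexOn ℝ Q f)
    (T : ℕ) (hT : 0 < T)
    (D : ℝ)
    (η : ℝ) (hη : η = Real.sqrt (2 * D / (T * σ * ρ ^ 2)))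
    (y z g : ℕ → Fin d → ℝ)
    (hymax : ∀ t < T, y t ∈ Q ∧
      ∀ y' ∈ Q, dotp (z t) y' - ω y' ≤ dotp (z t) (y t) - ω (y t))
    (hD : ∀ y' ∈ Q, ω y' - ω (y 0) - dotp (z 0) (y' - y 0) ≤ D)
    (hg : ∀ t < T, (∀ y' ∈ Q, f (y t) + dotp (g t) (y' - y t) ≤ f y') ∧
      dualNorm N (g t) ≤ ρ)
    (hz : ∀ t < T, z (t + 1) = z t - η • g t) :
    f ((1 / (T : ℝ)) • ∑ t ∈ Finset.range T, y t) - sInf (f '' Q) ≤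
        Real.sqrt (2 * D * σ * ρ ^ 2 / T) ∧
    (∀ ε : ℝ, 0 < ε → 2 * D * σ * ρ ^ 2 / ε ^ 2 ≤ (T : ℝ) →
      f ((1 / (T : ℝ)) • ∑ t ∈ Finset.range T, y t) - sInf (f '' Q) ≤ ε) := by
  have hnn := N_nonneg N hN0 hNsmul hNtri
  have hy0Q := (hymax 0 hT).1
  have hD0 : 0 ≤ D := by
    have h := hD (y 0) hy0Q
    simpa [dotp_zero_right] using h
  set ybar := (1 / (T : ℝ)) • ∑ t ∈ Finset.range T, y t with hybar
  have key : ∀ u ∈ Q, f ybar - f u ≤ Real.sqrt (2 * D * σ * ρ ^ 2 / T) := by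
    intro u hu
    have hsub : ∀ t, t < T → ∀ y' ∈ Q, ω (y t) + dotp (z t) (y' - y t) ≤ ω y' := by
      intro t ht y' hy'
      have h := (hymax t ht).2 y' hy'
      rw [dotp_sub]
      linarith
    have hV : ∀ t, t < T → ∀ x ∈ Q,
        (1 / (2 * σ)) * N (x - y t) ^ 2 ≤ ω x - ω (y t) - dotp (z t) (x - y t) :=
      fun t ht x hx => hstrong (y t) (hymax t ht).1 x hx (z t) (hsub t ht)
    have hpair : ∀ t, t < T → ∀ v, dotp (g t) v ≤ ρ * N v :=
      fun t ht v => dual_pairing N hN0 hNsmul hNtri (g t) ρ (hg t ht).2 v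
    rcases eq_or_lt_of_le hD0 with hDeq | hDpos
    · -- D = 0 : Q is a singleton
      have hQsingle : ∀ w ∈ Q, w = y 0 := by
        intro w hw
        have h1 := hV 0 hT w hw
        have h2 := hD w hw
        have h3 : 0 < 1 / (2 * σ) := by positivity
        have h5 : 1 / (2 * σ) * N (w - y 0) ^ 2 ≤ 0 := by linarith
        have h6 : N (w - y 0) ^ 2 ≤ 0 := by nlinarith
        have h4 : N (w - y 0) = 0 := by nlinarith [hnn (w - y 0), sq_nonneg (N (w - y 0))]
        exact sub_eq_zero.mp ((hN0 (w - y 0)).mp h4)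
      have hyt : ∀ t ∈ Finset.range T, y t = y 0 := fun t ht =>
        hQsingle (y t) (hymax t (Finset.mem_range.mp ht)).1
      have hsum : ∑ t ∈ Finset.range T, y t = (T : ℕ) • y 0 := by
        rw [Finset.sum_congr rfl hyt, Finset.sum_const, Finset.card_range]
      have hyb : ybar = y 0 := by
        rw [hybar, hsum]
        have hT' : (T : ℝ) ≠ 0 := Nat.cast_ne_zero.mpr hT.ne'
        rw [← Nat.cast_smul_eq_nsmul ℝ, smul_smul, one_div, inv_mul_cancel₀ hT', one_smul]
      have hu0 : u = y 0 := hQsingle u hu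
      rw [hyb, hu0, sub_self]
      exact Real.sqrt_nonneg (2 * D * σ * ρ ^ 2 / T)
    · -- D > 0
      obtain ⟨n, rfl⟩ : ∃ n, T = n + 1 := ⟨T - 1, (Nat.succ_pred_eq_of_pos hT).symm⟩
      set M : ℝ := ((n : ℝ) + 1) with hM
      have hM0 : 0 < M := by positivity
      have hMcast : ((n + 1 : ℕ) : ℝ) = M := by push_cast [hM]; ring
      have hc : 0 < 2 * D / (M * σ * ρ ^ 2) := by positivity
      have hηpos : 0 < η := by
        rw [hη, hMcast]
        exact Real.sqrt_pos.mpr hc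
      have hηsq : η ^ 2 = 2 * D / (M * σ * ρ ^ 2) := by
        rw [hη, hMcast, Real.sq_sqrt hc.le]
      clear_value M
      set V : ℕ → ℝ := fun t => ω u - ω (y t) - dotp (z t) (u - y t) with hVdef
      clear_value V
      have young : ∀ a : ℝ, 0 ≤ a →
          η * ρ * a ≤ 1 / (2 * σ) * a ^ 2 + σ * η ^ 2 * ρ ^ 2 / 2 := by
        intro a ha
        have h2 : (0 : ℝ) < 2 * σ := by linarith
        rw [show 1 / (2 * σ) * a ^ 2 + σ * η ^ 2 * ρ ^ 2 / 2
            = (a ^ 2 + σ ^ 2 * η ^ 2 * ρ ^ 2) / (2 * σ) by field_simp,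
          le_div_iff₀ h2]
        nlinarith [sq_nonneg (a - σ * η * ρ)]
      have hstep : ∀ t, t < n →
          η * (dotp (g t) (y t) - dotp (g t) u)
            ≤ V t - V (t + 1) + σ * η ^ 2 * ρ ^ 2 / 2 := by
        intro t ht
        have ht1 : t < n + 1 := Nat.lt_succ_of_lt ht
        have ht2 : t + 1 < n + 1 := Nat.succ_lt_succ ht
        have hz' := hz t ht1
        have hA1 := hV t ht1 (y (t + 1)) (hymax (t + 1) ht2).1
        have hA2 := hpair t ht1 (y t - y (t + 1))
        have hA3 : N (y t - y (t + 1)) = N (y (t + 1) - y t) := by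
          rw [show y t - y (t + 1) = (-1 : ℝ) • (y (t + 1) - y t) by module, hNsmul]
          simp
        rw [dotp_sub] at hA2 hA1
        rw [hA3] at hA2
        have hVt : V t - V (t + 1)
            = (ω (y (t + 1)) - ω (y t) - (dotp (z t) (y (t + 1)) - dotp (z t) (y t)))
              + η * (dotp (g t) (y (t + 1)) - dotp (g t) u) := by
          simp only [hVdef, hz', dotp_sub, dotp_sub_left, dotp_smul_left]
          ring
        rw [hVt]
        have hy1 := young (N (y (t + 1) - y t)) (hnn _)
        nlinarith [mul_le_mul_of_nonneg_left hA2 hηpos.le]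
      have hlast : η * (dotp (g n) (y n) - dotp (g n) u)
          ≤ V n + σ * η ^ 2 * ρ ^ 2 / 2 := by
        have hn1 : n < n + 1 := Nat.lt_succ_self n
        have hA1 : (1 / (2 * σ)) * N (u - y n) ^ 2 ≤ V n := by
          rw [hVdef]; exact hV n hn1 u hu
        have hA2 := hpair n hn1 (y n - u)
        have hA3 : N (y n - u) = N (u - y n) := by
          rw [show y n - u = (-1 : ℝ) • (u - y n) by module, hNsmul]
          simp
        rw [dotp_sub, hA3] at hA2
        have hy1 := young (N (u - y n)) (hnn _)
        nlinarith [mul_le_mul_of_nonneg_left hA2 hηpos.le]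
      have hsum1 : ∑ t ∈ Finset.range n, η * (dotp (g t) (y t) - dotp (g t) u)
          ≤ (V 0 - V n) + n * (σ * η ^ 2 * ρ ^ 2 / 2) := by
        calc ∑ t ∈ Finset.range n, η * (dotp (g t) (y t) - dotp (g t) u)
            ≤ ∑ t ∈ Finset.range n, ((V t - V (t + 1)) + σ * η ^ 2 * ρ ^ 2 / 2) :=
              Finset.sum_le_sum fun t ht => hstep t (Finset.mem_range.mp ht)
          _ = (V 0 - V n) + n * (σ * η ^ 2 * ρ ^ 2 / 2) := by
              rw [Finset.sum_add_distrib, Finset.sum_range_sub' V n, Finset.sum_const,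
                Finset.card_range, nsmul_eq_mul]
      have hV0 : V 0 ≤ D := by rw [hVdef]; exact hD u hu
      have hsumT : ∑ t ∈ Finset.range (n + 1), η * (dotp (g t) (y t) - dotp (g t) u)
          ≤ D + M * (σ * η ^ 2 * ρ ^ 2 / 2) := by
        rw [Finset.sum_range_succ]
        have hMsplit : M * (σ * η ^ 2 * ρ ^ 2 / 2)
            = n * (σ * η ^ 2 * ρ ^ 2 / 2) + σ * η ^ 2 * ρ ^ 2 / 2 := by
          rw [hM]; ring
        linarith [hsum1, hlast]
      have hfsub : ∀ t, t < n + 1 →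
          f (y t) - f u ≤ dotp (g t) (y t) - dotp (g t) u := by
        intro t ht
        have h := (hg t ht).1 u hu
        rw [dotp_sub] at h
        linarith
      set S : ℝ := ∑ t ∈ Finset.range (n + 1), f (y t) with hS
      clear_value S
      have hfsum : η * (S - M * f u) ≤ D + M * (σ * η ^ 2 * ρ ^ 2 / 2) := by
        have h1 : ∀ t ∈ Finset.range (n + 1),
            η * (f (y t) - f u) ≤ η * (dotp (g t) (y t) - dotp (g t) u) :=
          fun t ht =>
            mul_le_mul_of_nonneg_left (hfsub t (Finset.mem_range.mp ht)) hηpos.le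
        have h2 := Finset.sum_le_sum h1
        have h3 : ∑ t ∈ Finset.range (n + 1), η * (f (y t) - f u) = η * (S - M * f u) := by
          rw [← Finset.mul_sum, Finset.sum_sub_distrib, Finset.sum_const, Finset.card_range,
            nsmul_eq_mul, hMcast, hS]
        linarith [hsumT]
      have hJ : f ybar ≤ (1 / M) * S := by
        have hw : ∀ t ∈ Finset.range (n + 1), (0 : ℝ) ≤ 1 / M := fun t _ => one_div_nonneg.mpr hM0.le
        have hw1 : ∑ _t ∈ Finset.range (n + 1), (1 / M : ℝ) = 1 := by
          rw [Finset.sum_const, Finset.card_range, nsmul_eq_mul, hMcast, mul_one_div,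
            div_self hM0.ne']
        have hmem : ∀ t ∈ Finset.range (n + 1), y t ∈ Q := fun t ht =>
          (hymax t (Finset.mem_range.mp ht)).1
        have hj := hf.map_sum_le hw hw1 hmem
        simp only [smul_eq_mul] at hj
        have e1 : ∑ t ∈ Finset.range (n + 1), (1 / M : ℝ) • y t
            = (1 / ((n + 1 : ℕ) : ℝ)) • ∑ t ∈ Finset.range (n + 1), y t := by
          rw [← Finset.smul_sum, hMcast]
        have e2 : ∑ t ∈ Finset.range (n + 1), (1 / M : ℝ) * f (y t) = (1 / M) * S := by
          rw [← Finset.mul_sum, hS]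
        rw [e1, e2] at hj
        exact hj
      have hBη : Real.sqrt (2 * D * σ * ρ ^ 2 / ((n + 1 : ℕ) : ℝ)) * η = 2 * D / M := by
        rw [hη, hMcast, ← Real.sqrt_mul (div_nonneg (by positivity) hM0.le)]
        rw [show 2 * D * σ * ρ ^ 2 / M * (2 * D / (M * σ * ρ ^ 2)) = (2 * D / M) ^ 2 by
          field_simp]
        exact Real.sqrt_sq (div_nonneg (by linarith) hM0.le)
      set B : ℝ := Real.sqrt (2 * D * σ * ρ ^ 2 / ((n + 1 : ℕ) : ℝ)) with hB
      clear_value B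
      have e1 : (η * M) * B = 2 * D := by
        rw [show (η * M) * B = (B * η) * M by ring, hBη, div_mul_cancel₀ _ hM0.ne']
      have e2 : (η * M) * (f ybar - f u) ≤ η * (S - M * f u) := by
        have h1 : f ybar - f u ≤ (1 / M) * S - f u := by linarith [hJ]
        have h2 := mul_le_mul_of_nonneg_left h1 (mul_pos hηpos hM0).le
        calc (η * M) * (f ybar - f u) ≤ (η * M) * ((1 / M) * S - f u) := h2
          _ = η * (S - M * f u) := by
              field_simp
      have e3 : η * (S - M * f u) ≤ 2 * D := by
        have hDD : M * (σ * η ^ 2 * ρ ^ 2 / 2) = D := by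
          rw [hηsq]; field_simp
        linarith [hfsum]
      have hfin : (η * M) * (f ybar - f u) ≤ (η * M) * B := by linarith [e1, e2, e3]
      exact le_of_mul_le_mul_left hfin (mul_pos hηpos hM0)
  have hTr : (0 : ℝ) < (T : ℝ) := Nat.cast_pos.mpr hT
  have hgoal1 : f ybar - sInf (f '' Q) ≤ Real.sqrt (2 * D * σ * ρ ^ 2 / T) := by
    have hlb : f ybar - Real.sqrt (2 * D * σ * ρ ^ 2 / T) ≤ sInf (f '' Q) := by
      apply le_csInf (hQne.image f)
      rintro b ⟨w, hw, rfl⟩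
      linarith [key w hw]
    linarith
  refine ⟨hgoal1, fun ε hε hTε => ?_⟩
  have hs : Real.sqrt (2 * D * σ * ρ ^ 2 / T) ≤ ε := by
    have h1 : 2 * D * σ * ρ ^ 2 / T ≤ ε ^ 2 := by
      rw [div_le_iff₀ hTr]
      rw [div_le_iff₀ (by positivity)] at hTε
      nlinarith
    calc Real.sqrt (2 * D * σ * ρ ^ 2 / T) ≤ Real.sqrt (ε ^ 2) := Real.sqrt_le_sqrt h1
      _ = ε := Real.sqrt_sq hε.le
  linarith
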